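/- Let n, m be positive integers, let f : ℝⁿ → ℝⁿ, g : ℝⁿ → (ℝᵐ →L[ℝ] ℝⁿ), and u : ℝⁿ → ℝᵐ be arbitrary maps, let h : ℝⁿ → ℝ be differentiable, and let α : ℝ → ℝ be an extended class K function. Suppose that for every z ∈ ℝⁿ, ⟪∇h(z), f(z) + g(z)(u(z))⟫ ≥ -α(h(z)). Then every differentiable curve x : ℝ → ℝⁿ satisfying x'(t) = f(x(t)) + g(x(t))(u(x(t))) for all t ≥ 0 satisfies: for every ε > 0 there exists T ≥ 0 such that h(x(t)) ≥ -ε for all t ≥ T. In particular, the trajectory asymptotically approaches the safe set S = {z ∈ ℝⁿ : h(z) ≥ 0}. -/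

import Mathlib

open Real Set

lemma inner_gradient_eq {E : Type*} [NormedAddCommGroup E] [InnerProductSpace ℝ E]
    [CompleteSpace E] (h : E → ℝ) (z v : E) :
    (inner ℝ (gradient h z) v : ℝ) = fderiv ℝ h z v := by
  rw [gradient, ← InnerProductSpace.toDual_apply_apply,
    (InnerProductSpace.toDual ℝ E).apply_symm_apply]

/-- Asymptotic stability of the safe set (Theorem 3): under the control barrier
function condition `⟪∇h(z), f(z) + g(z)(u(z))⟫ ≥ -α(h(z))` with `α` an extended
class K function, every solution of `ẋ = f(x) + g(x) u(x)` asymptotically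
approaches the safe set `S = {z | h z ≥ 0}`: for every `ε > 0` there is `T ≥ 0`
with `h (x t) ≥ -ε` for all `t ≥ T`. -/
theorem cbf_asymptotic_stability
    (n m : ℕ) (hn : 0 < n) (hm : 0 < m)
    (f : EuclideanSpace ℝ (Fin n) → EuclideanSpace ℝ (Fin n))
    (g : EuclideanSpace ℝ (Fin n) → (EuclideanSpace ℝ (Fin m) →L[ℝ] EuclideanSpace ℝ (Fin n)))
    (u : EuclideanSpace ℝ (Fin n) → EuclideanSpace ℝ (Fin m))
    (h : EuclideanSpace ℝ (Fin n) → ℝ) (hhdiff : Differentiable ℝ h)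
    (α : ℝ → ℝ) (hαcont : Continuous α) (hαmono : StrictMono α) (hα0 : α 0 = 0)
    (hcbf : ∀ z : EuclideanSpace ℝ (Fin n),
      (inner ℝ (gradient h z) (f z + g z (u z)) : ℝ) ≥ -α (h z))
    (x : ℝ → EuclideanSpace ℝ (Fin n)) (hx : Differentiable ℝ x)
    (hode : ∀ t : ℝ, 0 ≤ t → deriv x t = f (x t) + g (x t) (u (x t))) :
    ∀ ε : ℝ, 0 < ε → ∃ T : ℝ, 0 ≤ T ∧ ∀ t : ℝ, T ≤ t → h (x t) ≥ -ε := by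
  intro ε hε
  set y : ℝ → ℝ := fun t => h (x t) with hy
  have hydiff : Differentiable ℝ y := hhdiff.comp hx
  have hycont : Continuous y := hydiff.continuous
  -- derivative of y equals the inner product, for t ≥ 0
  have hderiv : ∀ t : ℝ, 0 ≤ t →
      deriv y t = inner ℝ (gradient h (x t)) (f (x t) + g (x t) (u (x t))) := by
    intro t ht
    have h1 : HasDerivAt y (fderiv ℝ h (x t) (deriv x t)) t :=
      (hhdiff (x t)).hasFDerivAt.comp_hasDerivAt t (hx t).hasDerivAt
    rw [h1.deriv, hode t ht, inner_gradient_eq]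
  have hderiv_ge : ∀ t : ℝ, 0 ≤ t → deriv y t ≥ -α (y t) := by
    intro t ht
    rw [hderiv t ht]; exact hcbf (x t)
  -- bound for the derivative when y t < -ε/2
  have hbound : ∀ t : ℝ, 0 ≤ t → y t < -(ε/2) → 0 < deriv y t := by
    intro t ht hyt
    have h1 : α (y t) < α (-(ε/2)) := hαmono hyt
    have h2 : α (-(ε/2)) < 0 := by
      rw [← hα0]; exact hαmono (by linarith)
    have := hderiv_ge t ht
    linarith
  set c : ℝ := -α (-(ε/2)) with hc
  have hcpos : 0 < c := by
    have : α (-(ε/2)) < 0 := by rw [← hα0]; exact hαmono (by linarith)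
    simpa [hc] using this
  -- Step 1: there exists T₀ ≥ 0 with y T₀ ≥ -(ε/2)
  have hT0 : ∃ T₀ : ℝ, 0 ≤ T₀ ∧ y T₀ ≥ -(ε/2) := by
    by_contra hcon
    push_neg at hcon
    -- then deriv y t ≥ c on (0,∞) (strictly bigger, use ≥ c suffices)
    have hw : StrictMonoOn (fun t => y t - c * t) (Ici (0:ℝ)) := by
      apply strictMonoOn_of_deriv_pos (convex_Ici 0)
        (by fun_prop)
      intro t ht
      rw [interior_Ici] at ht
      have ht0 : (0:ℝ) ≤ t := le_of_lt ht
      have hyt := hcon t ht0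
      have h1 : α (y t) < α (-(ε/2)) := hαmono hyt
      have hd : HasDerivAt (fun t => y t - c * t) (deriv y t - c * 1) t :=
        (hydiff t).hasDerivAt.sub ((hasDerivAt_id t).const_mul c)
      rw [hd.deriv, mul_one]
      have := hderiv_ge t ht0
      simp only [hc]
      linarith
    -- evaluate at large t
    set T := max 1 ((-(ε/2) - y 0) / c + 1) with hT
    have hT1 : (1:ℝ) ≤ T := le_max_left _ _
    have hT2 : (-(ε/2) - y 0) / c + 1 ≤ T := le_max_right _ _
    have h1 : y 0 - c * 0 < y T - c * T :=
      hw (self_mem_Ici) (by simp; linarith) (by linarith)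
    rw [mul_zero, sub_zero] at h1
    have h2 : (-(ε/2) - y 0) / c < T := by linarith
    have h3 : -(ε/2) - y 0 < c * T := by
      rw [div_lt_iff₀ hcpos] at h2; nlinarith [h2]
    have h4 := hcon T (by linarith)
    clear_value T c y
    linarith
  obtain ⟨T₀, hT₀0, hT₀⟩ := hT0
  refine ⟨T₀, hT₀0, fun t₁ ht₁ => ?_⟩
  -- Step 2: invariance
  by_contra hcon
  push_neg at hcon
  have hyt₁ : y t₁ < -ε := hcon
  set A : Set ℝ := {t | t ∈ Icc T₀ t₁ ∧ y t ≥ -(ε/2)} with hA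
  have hAne : A.Nonempty := ⟨T₀, ⟨le_refl _, ht₁⟩, hT₀⟩
  have hAbdd : BddAbove A := ⟨t₁, fun t ht => ht.1.2⟩
  have hAclosed : IsClosed A := by
    have : A = Icc T₀ t₁ ∩ y ⁻¹' Ici (-(ε/2)) := rfl
    rw [this]
    exact isClosed_Icc.inter (isClosed_Ici.preimage hycont)
  set s := sSup A with hs
  have hsA : s ∈ A := hAclosed.csSup_mem hAne hAbdd
  have hys : y s ≥ -(ε/2) := hsA.2
  have hst₁ : s < t₁ := by
    rcases lt_or_eq_of_le hsA.1.2 with h' | h'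
    · exact h'
    · exfalso; rw [h'] at hys; linarith
  have hsnn : 0 ≤ s := le_trans hT₀0 hsA.1.1
  have hmono : StrictMonoOn y (Icc s t₁) := by
    apply strictMonoOn_of_deriv_pos (convex_Icc s t₁) (hycont.continuousOn)
    intro t ht
    rw [interior_Icc] at ht
    have ht0 : 0 ≤ t := le_trans hsnn (le_of_lt ht.1)
    have hyt : y t < -(ε/2) := by
      by_contra hyt'
      push_neg at hyt'
      have : t ∈ A := ⟨⟨le_trans hsA.1.1 (le_of_lt ht.1), le_of_lt ht.2⟩, hyt'⟩
      exact absurd (le_csSup hAbdd this) (not_le.mpr ht.1)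
    exact hbound t ht0 hyt
  have : y s < y t₁ :=
    hmono ⟨le_refl _, le_of_lt hst₁⟩ ⟨le_of_lt hst₁, le_refl _⟩ hst₁
  linarith
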